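/- Let A, B, C, D be 3×3 complex matrices, and define the 6×6 block matrices S1 = [[A, B], [C, D]] and S2 = [[A, -B], [-C, D]]. Then S1·S2·S1 = S2·S1·S2 if and only if A²B - BCB - ABD + BD² = 0 and CA² - DCA - CBC + D²C = 0. -/
import Mathlib


open Matrix

theorem stmt_0 (A B C D : Matrix (Fin 3) (Fin 3) ℂ) :
    (fromBlocks A B C D * fromBlocks A (-B) (-C) D * fromBlocks A B C D =
      fromBlocks A (-B) (-C) D * fromBlocks A B C D * fromBlocks A (-B) (-C) D) ↔
    (A ^ 2 * B - B * C * B - A * B * D + B * D ^ 2 = 0 ∧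
      C * A ^ 2 - D * C * A - C * B * C + D ^ 2 * C = 0) := by
  rw [fromBlocks_multiply, fromBlocks_multiply, fromBlocks_multiply, fromBlocks_multiply,
    fromBlocks_inj]
  constructor
  · rintro ⟨-, h2, h3, -⟩
    constructor
    · have h : (A ^ 2 * B - B * C * B - A * B * D + B * D ^ 2) +
          (A ^ 2 * B - B * C * B - A * B * D + B * D ^ 2) = 0 := by
        linear_combination (norm := noncomm_ring) h2
      have h' := congrArg (fun M => ((2:ℂ)⁻¹) • M) h
      simpa [smul_add, ← two_smul ℂ, smul_smul] using h'
    · have h : (C * A ^ 2 - D * C * A - C * B * C + D ^ 2 * C) +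
          (C * A ^ 2 - D * C * A - C * B * C + D ^ 2 * C) = 0 := by
        linear_combination (norm := noncomm_ring) h3
      have h' := congrArg (fun M => ((2:ℂ)⁻¹) • M) h
      simpa [smul_add, ← two_smul ℂ, smul_smul] using h'
  · rintro ⟨h1, h2⟩
    refine ⟨by noncomm_ring, ?_, ?_, by noncomm_ring⟩
    · linear_combination (norm := noncomm_ring) (h1 + h1)
    · linear_combination (norm := noncomm_ring) (h2 + h2)
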